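/- Let a₁, a₂ be Hurwitz stable real polynomials of degree n and c a real polynomial such that both c/a₁ and c/a₂ are SPR. Then for all α ≥ 0, β ≥ 0 with (α,β) ≠ (0,0), the function c/(α·a₁ + β·a₂) is SPR; in particular α·a₁ + β·a₂ is Hurwitz stable and Re[c(iω)/(α·a₁(iω)+β·a₂(iω))] > 0 for all real ω. -/

import Mathlib

open Polynomial

noncomputable def evalI (p : Polynomial ℝ) (ω : ℝ) : ℂ :=
  (p.map (algebraMap ℝ ℂ)).eval ((ω : ℂ) * Complex.I)

noncomputable def evalNegI (p : Polynomial ℝ) (ω : ℝ) : ℂ :=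
  (p.map (algebraMap ℝ ℂ)).eval (-((ω : ℂ) * Complex.I))

def Hurwitz (p : Polynomial ℝ) : Prop :=
  ∀ z : ℂ, (p.map (algebraMap ℝ ℂ)).eval z = 0 → z.re < 0


open Complex Filter Set Bornology Asymptotics

lemma spr_flip {u v : ℂ} (h : 0 < (u / v).re) : v ≠ 0 ∧ u ≠ 0 ∧ 0 < (v / u).re := by
  have hv : v ≠ 0 := by rintro rfl; simp at h
  have hu : u ≠ 0 := by rintro rfl; simp at h
  refine ⟨hv, hu, ?_⟩
  have : v / u = (u / v)⁻¹ := by field_simp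
  rw [this, Complex.inv_re]
  have hne : u / v ≠ 0 := div_ne_zero hu hv
  exact div_pos h (Complex.normSq_pos.2 hne)

lemma spr_comb {u v₁ v₂ : ℂ} {α β : ℝ} (h₁ : 0 < (u / v₁).re) (h₂ : 0 < (u / v₂).re)
    (hα : 0 ≤ α) (hβ : 0 ≤ β) (hαβ : 0 < α ∨ 0 < β) :
    (↑α * v₁ + ↑β * v₂) ≠ 0 ∧ 0 < (u / (↑α * v₁ + ↑β * v₂)).re := by
  obtain ⟨hv₁, hu, hr₁⟩ := spr_flip h₁
  obtain ⟨hv₂, -, hr₂⟩ := spr_flip h₂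
  have key : 0 < ((↑α * v₁ + ↑β * v₂) / u).re := by
    have : (↑α * v₁ + ↑β * v₂) / u = ↑α * (v₁ / u) + ↑β * (v₂ / u) := by ring
    rw [this, Complex.add_re, Complex.re_ofReal_mul, Complex.re_ofReal_mul]
    rcases hαβ with h | h
    · exact add_pos_of_pos_of_nonneg (mul_pos h hr₁) (mul_nonneg hβ hr₂.le)
    · exact add_pos_of_nonneg_of_pos (mul_nonneg hα hr₁.le) (mul_pos h hr₂)
  obtain ⟨-, hw, hres⟩ := spr_flip key
  exact ⟨hw, hres⟩

lemma bounded_on_rhp (n : ℕ) (A C : ℂ[X]) (hC : C.natDegree ≤ n) (hA : A.natDegree ≤ n)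
    (hAn : A.coeff n ≠ 0) (hAne : ∀ z : ℂ, 0 ≤ z.re → eval z A ≠ 0) :
    ∃ M : ℝ, ∀ z : ℂ, 0 ≤ z.re → ‖eval z C / eval z A‖ ≤ M := by
  set RC := reflect n C with hRC
  set RA := reflect n A with hRA
  set g : ℂ → ℂ := fun w => eval w RC / eval w RA with hg
  have hRA0 : eval 0 RA ≠ 0 := by
    rw [hRA, ← coeff_zero_eq_eval_zero, coeff_reflect, revAt_zero]; exact hAn
  -- g continuous at 0
  have hcont : ContinuousAt g 0 := by
    exact (Polynomial.continuous RC).continuousAt.div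
      (Polynomial.continuous RA).continuousAt hRA0
  -- get a ball where ‖g‖ ≤ ‖g 0‖ + 1
  obtain ⟨δ, hδpos, hδ⟩ := Metric.continuousAt_iff.1 hcont 1 one_pos
  have hball : ∀ w : ℂ, ‖w‖ < δ → ‖g w‖ ≤ ‖g 0‖ + 1 := by
    intro w hw
    have h1 : ‖g w - g 0‖ < 1 := by
      have := hδ (x := w) (by simpa [Complex.dist_eq] using hw)
      simpa [dist_eq_norm] using this
    calc ‖g w‖ = ‖g w - g 0 + g 0‖ := by rw [sub_add_cancel]
    _ ≤ ‖g w - g 0‖ + ‖g 0‖ := norm_add_le _ _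
    _ ≤ ‖g 0‖ + 1 := by linarith
  -- outer region: for ‖z‖ > δ⁻¹, eval z C / eval z A = g z⁻¹
  have houter : ∀ z : ℂ, δ⁻¹ < ‖z‖ → ‖eval z C / eval z A‖ ≤ ‖g 0‖ + 1 := by
    intro z hz
    have hz0 : z ≠ 0 := by
      intro h; rw [h, norm_zero] at hz; exact absurd hz (not_lt.2 (inv_nonneg.2 hδpos.le))
    have : Invertible z := invertibleOfNonzero hz0
    have hCe : eval (⅟ z) RC * z ^ n = eval z C := by
      simpa using eval₂_reflect_mul_pow (RingHom.id ℂ) z n C hC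
    have hAe : eval (⅟ z) RA * z ^ n = eval z A := by
      simpa using eval₂_reflect_mul_pow (RingHom.id ℂ) z n A hA
    have heq : eval z C / eval z A = g (⅟ z) := by
      rw [← hCe, ← hAe, hg]
      exact mul_div_mul_right _ _ (pow_ne_zero _ hz0)
    rw [heq]
    apply hball
    rw [invOf_eq_inv, norm_inv]
    have hzpos : 0 < ‖z‖ := norm_pos_iff.2 hz0
    exact (inv_lt_comm₀ hδpos hzpos).mp hz
  -- inner region: compact
  have hKc : IsCompact (Metric.closedBall (0:ℂ) δ⁻¹ ∩ {z : ℂ | 0 ≤ z.re}) :=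
    (isCompact_closedBall _ _).inter_right (isClosed_le continuous_const Complex.continuous_re)
  have hcontF : ContinuousOn (fun z => eval z C / eval z A)
      (Metric.closedBall (0:ℂ) δ⁻¹ ∩ {z : ℂ | 0 ≤ z.re}) := by
    apply ContinuousOn.div (Polynomial.continuous C).continuousOn
      (Polynomial.continuous A).continuousOn
    exact fun z hz => hAne z hz.2
  obtain ⟨M₂, hM₂⟩ := hKc.exists_bound_of_continuousOn hcontF
  refine ⟨max (‖g 0‖ + 1) M₂, fun z hzre => ?_⟩
  rcases le_or_gt ‖z‖ δ⁻¹ with h | h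
  · exact le_max_of_le_right (hM₂ z ⟨by simpa [Complex.dist_eq, Metric.mem_closedBall] using h, hzre⟩)
  · exact le_max_of_le_left (houter z h)

lemma rhp_pos_re (A C : ℂ[X])
    (hAne : ∀ z : ℂ, 0 ≤ z.re → eval z A ≠ 0)
    (hbd : ∃ M : ℝ, ∀ z : ℂ, 0 ≤ z.re → ‖eval z C / eval z A‖ ≤ M)
    (haxis : ∀ y : ℝ, 0 < (eval ((y : ℂ) * I) C / eval ((y : ℂ) * I) A).re) :
    ∀ z : ℂ, 0 < z.re → 0 < (eval z C / eval z A).re := by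
  obtain ⟨M, hM⟩ := hbd
  set F : ℂ → ℂ := fun z => eval z C / eval z A with hF
  set g : ℂ → ℂ := fun z => Complex.exp (-F z) with hg
  have hU : IsOpen {z : ℂ | 0 < z.re} := isOpen_lt continuous_const Complex.continuous_re
  have hsub : {z : ℂ | 0 < z.re} ⊆ {z : ℂ | 0 ≤ z.re} := fun z hz => le_of_lt (show (0:ℝ) < z.re from hz)
  have hFdiff : DifferentiableOn ℂ F {z : ℂ | 0 < z.re} := by
    apply DifferentiableOn.div (Polynomial.differentiable C).differentiableOn
      (Polynomial.differentiable A).differentiableOn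
    exact fun z hz => hAne z (le_of_lt hz)
  have hgdiff : DifferentiableOn ℂ g {z : ℂ | 0 < z.re} := (hFdiff.neg).cexp
  have hgcont : ContinuousOn g (closure {z : ℂ | 0 < z.re}) := by
    rw [closure_setOf_lt_re]
    apply ContinuousOn.cexp
    apply ContinuousOn.neg
    apply ContinuousOn.div (Polynomial.continuous C).continuousOn
      (Polynomial.continuous A).continuousOn
    exact fun z hz => hAne z hz
  have hd : DiffContOnCl ℂ g {z : ℂ | 0 < z.re} := ⟨hgdiff, hgcont⟩
  have hnormg : ∀ z : ℂ, 0 ≤ z.re → ‖g z‖ ≤ Real.exp M := by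
    intro z hz
    rw [hg]
    simp only [Complex.norm_exp, Complex.neg_re]
    apply Real.exp_le_exp.2
    have h2 : ‖F z‖ ≤ M := hM z hz
    have h3 : |(F z).re| ≤ ‖F z‖ := Complex.abs_re_le_norm _
    have h4 : -M ≤ (F z).re := by
      have := (abs_le.1 (le_trans h3 h2)).1
      linarith
    linarith
  have hexp : ∃ c < (2 : ℝ), ∃ B,
      g =O[Bornology.cobounded ℂ ⊓ Filter.principal {z : ℂ | 0 < z.re}]
        fun z => Real.exp (B * ‖z‖ ^ c) := by
    refine ⟨1, one_lt_two, 0, ?_⟩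
    apply Asymptotics.IsBigO.of_bound (Real.exp M)
    filter_upwards [Filter.mem_inf_of_right (Filter.mem_principal_self _)] with z hz
    simp only [zero_mul, Real.exp_zero, norm_one, mul_one]
    exact hnormg z (le_of_lt (show (0:ℝ) < z.re from hz))
  have hre : IsBoundedUnder (· ≤ ·) atTop fun x : ℝ => ‖g x‖ := by
    refine ⟨Real.exp M, ?_⟩
    rw [Filter.eventually_map]
    filter_upwards [Filter.eventually_ge_atTop (0:ℝ)] with x hx
    exact hnormg x (by simpa using hx)
  have him : ∀ x : ℝ, ‖g ((x : ℂ) * I)‖ ≤ 1 := by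
    intro x
    rw [hg]
    simp only [Complex.norm_exp, Complex.neg_re]
    rw [Real.exp_le_one_iff]
    linarith [haxis x]
  have hle : ∀ z : ℂ, 0 ≤ z.re → ‖g z‖ ≤ 1 := fun z hz =>
    PhragmenLindelof.right_half_plane_of_bounded_on_real hd hexp hre him hz
  -- nonneg real part everywhere on closed RHP
  have hge : ∀ z : ℂ, 0 ≤ z.re → 0 ≤ (F z).re := by
    intro z hz
    have := hle z hz
    rw [hg] at this
    simp only [Complex.norm_exp, Complex.neg_re] at this
    rw [Real.exp_le_one_iff] at this
    linarith
  -- strictness by maximum modulus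
  intro z₀ hz₀
  rcases lt_or_eq_of_le (hge z₀ (le_of_lt hz₀)) with h | h
  · exact h
  exfalso
  have hmax : IsMaxOn (norm ∘ g) {z : ℂ | 0 < z.re} z₀ := by
    intro z hz
    simp only [Function.comp_apply, mem_setOf_eq]
    calc ‖g z‖ ≤ 1 := hle z (le_of_lt hz)
    _ = ‖g z₀‖ := by
        rw [hg]; simp only [Complex.norm_exp, Complex.neg_re, ← h]
        simp
  have heq : EqOn g (Function.const ℂ (g z₀)) {z : ℂ | 0 < z.re} :=
    Complex.eqOn_of_isPreconnected_of_isMaxOn_norm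
      (convex_halfSpace_re_gt 0).isPreconnected hU hgdiff hz₀ hmax
  -- g tends to g 0 within the open half plane, but is constant g z₀ there
  have h0cl : (0 : ℂ) ∈ closure {z : ℂ | 0 < z.re} := by
    rw [closure_setOf_lt_re]; simp
  have hne : (Filter.NeBot (nhdsWithin (0:ℂ) {z : ℂ | 0 < z.re})) := by
    rw [← mem_closure_iff_nhdsWithin_neBot]
    rw [closure_setOf_lt_re]; simp
  have ht1 : Tendsto g (nhdsWithin (0:ℂ) {z : ℂ | 0 < z.re}) (nhds (g 0)) := by
    have := hgcont 0 h0cl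
    exact this.mono_left (nhdsWithin_mono _ subset_closure)
  have ht2 : Tendsto g (nhdsWithin (0:ℂ) {z : ℂ | 0 < z.re}) (nhds (g z₀)) := by
    apply Filter.Tendsto.congr' _ tendsto_const_nhds
    filter_upwards [self_mem_nhdsWithin] with z hz
    exact (heq hz).symm
  have hgeq : g 0 = g z₀ := tendsto_nhds_unique ht1 ht2
  have h1 : ‖g 0‖ < 1 := by
    have := haxis 0
    rw [hg]
    simp only [Complex.norm_exp, Complex.neg_re]
    rw [Real.exp_lt_one_iff]
    simpa using this
  have h2 : ‖g z₀‖ = 1 := by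
    rw [hg]; simp only [Complex.norm_exp, Complex.neg_re, ← h]
    simp
  rw [hgeq, h2] at h1
  exact lt_irrefl _ h1


-- nonvanishing of the denominator on the closed right half-plane
lemma denom_ne_zero (a c : Polynomial ℝ) (ha : Hurwitz a)
    (hspr : ∀ ω : ℝ, 0 < (evalI c ω / evalI a ω).re) :
    ∀ z : ℂ, 0 ≤ z.re → eval z (a.map (algebraMap ℝ ℂ)) ≠ 0 := by
  intro z hz
  rcases eq_or_lt_of_le hz with h | h
  · have hzeq : z = (↑z.im : ℂ) * Complex.I := by
      have h0 := (Complex.re_add_im z).symm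
      rw [← h] at h0
      simpa using h0
    have h1 : eval ((z.im : ℂ) * Complex.I) (a.map (algebraMap ℝ ℂ)) ≠ 0 :=
      (spr_flip (hspr z.im)).1
    rw [← hzeq] at h1
    exact h1
  · intro h0
    exact absurd (ha z h0) (not_lt.2 (le_of_lt h))

/-- Convexity in the denominator: if c/a₁ and c/a₂ are both SPR, then for all
α, β ≥ 0 with (α,β) ≠ (0,0), the combination α·a₁ + β·a₂ is Hurwitz and
c/(α·a₁ + β·a₂) is SPR. -/
theorem stmt18 (n : ℕ) (a₁ a₂ c : Polynomial ℝ)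
    (ha₁ : Hurwitz a₁) (ha₂ : Hurwitz a₂)
    (hdeg₁ : a₁.degree = n) (hdeg₂ : a₂.degree = n) (hdegc : c.degree = n)
    (hspr₁ : ∀ ω : ℝ, 0 < (evalI c ω / evalI a₁ ω).re)
    (hspr₂ : ∀ ω : ℝ, 0 < (evalI c ω / evalI a₂ ω).re) :
    ∀ α β : ℝ, 0 ≤ α → 0 ≤ β → (α, β) ≠ (0, 0) →
      Hurwitz (α • a₁ + β • a₂) ∧
      ∀ ω : ℝ, 0 < (evalI c ω / evalI (α • a₁ + β • a₂) ω).re := by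
  have hMC : (c.map (algebraMap ℝ ℂ)).natDegree ≤ n := by
    refine le_trans (natDegree_map_le) ?_
    exact le_of_eq (natDegree_eq_of_degree_eq_some hdegc)
  -- interior positivity for a single Hurwitz denominator
  have interior : ∀ (a : Polynomial ℝ), Hurwitz a → a.degree = n →
      (∀ ω : ℝ, 0 < (evalI c ω / evalI a ω).re) →
      ∀ z : ℂ, 0 < z.re →
        0 < (eval z (c.map (algebraMap ℝ ℂ)) / eval z (a.map (algebraMap ℝ ℂ))).re := by
    intro a ha hdeg hspr
    have hAne := denom_ne_zero a c ha hspr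
    have hane : a ≠ 0 := fun h => by simp [h] at hdeg
    have hnd : a.natDegree = n := natDegree_eq_of_degree_eq_some hdeg
    have hcoeff : (a.map (algebraMap ℝ ℂ)).coeff n ≠ 0 := by
      rw [coeff_map, ← hnd, coeff_natDegree]
      simpa using leadingCoeff_ne_zero.2 hane
    have hMA : (a.map (algebraMap ℝ ℂ)).natDegree ≤ n :=
      le_trans (natDegree_map_le) (le_of_eq hnd)
    have hbd := bounded_on_rhp n (a.map (algebraMap ℝ ℂ)) (c.map (algebraMap ℝ ℂ)) hMC hMA
      hcoeff hAne
    exact rhp_pos_re _ _ hAne hbd (fun y => hspr y)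
  intro α β hα hβ hne
  have hαβ : 0 < α ∨ 0 < β := by
    rcases eq_or_lt_of_le hα with h | h
    · rcases eq_or_lt_of_le hβ with h' | h'
      · exact absurd (by rw [← h, ← h']) hne
      · exact Or.inr h'
    · exact Or.inl h
  -- evaluation of the mapped combination
  have hcomb : ∀ z : ℂ, eval z (((α • a₁ + β • a₂)).map (algebraMap ℝ ℂ)) =
      (↑α : ℂ) * eval z (a₁.map (algebraMap ℝ ℂ)) + (↑β : ℂ) * eval z (a₂.map (algebraMap ℝ ℂ)) := by
    intro z
    rw [smul_eq_C_mul, smul_eq_C_mul]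
    simp [Polynomial.map_add, Polynomial.map_mul, Polynomial.map_C]
  constructor
  · intro z hz0
    by_contra hre
    push_neg at hre
    rcases eq_or_lt_of_le hre with h | h
    · -- on the axis
      have hzeq : z = (↑z.im : ℂ) * Complex.I := by
        have h0 := (Complex.re_add_im z).symm
        rw [← h] at h0
        simpa using h0
      have hne0 := (spr_comb (hspr₁ z.im) (hspr₂ z.im) hα hβ hαβ).1
      apply hne0
      show (↑α : ℂ) * eval ((z.im : ℂ) * Complex.I) (a₁.map (algebraMap ℝ ℂ)) +
        (↑β : ℂ) * eval ((z.im : ℂ) * Complex.I) (a₂.map (algebraMap ℝ ℂ)) = 0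
      rw [← hcomb, ← hzeq]
      exact hz0
    · -- interior
      have h₁ := interior a₁ ha₁ hdeg₁ hspr₁ z h
      have h₂ := interior a₂ ha₂ hdeg₂ hspr₂ z h
      have := (spr_comb h₁ h₂ hα hβ hαβ).1
      apply this
      rw [← hcomb]
      exact hz0
  · intro ω
    have hx := (spr_comb (hspr₁ ω) (hspr₂ ω) hα hβ hαβ).2
    have he : evalI (α • a₁ + β • a₂) ω = (↑α : ℂ) * evalI a₁ ω + (↑β : ℂ) * evalI a₂ ω :=
      hcomb _
    rw [he]
    exact hx
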